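/- arXiv:1904.12992 — 11 statements merged into one kernel-verified Lean document; each statement's English description precedes it below -/
import Mathlib

section
/- Let N ≥ 1 and let τ_0 < τ_1 < ... < τ_N be real numbers. Let B_0,...,B_N be a Case-(a) Birkhoff basis for these nodes. Define the N×N matrices D_a := (L_j'(τ_i))_{1≤i,j≤N} and B_a := (B_j(τ_i))_{1≤i,j≤N}. Then D_a · B_a = I_N, the N×N identity matrix. -/
open Polynomial Matrix

/-- Theorem 1 (Wang–Samson–Zhao), Case (a): for a Case-(a) Birkhoff basis
`B₀,…,B_N` and Lagrange basis `L₀,…,L_N` on nodes `τ₀ < ⋯ < τ_N`,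
the matrices `D_a := (L_j'(τ_i))_{1≤i,j≤N}` and `B_a := (B_j(τ_i))_{1≤i,j≤N}`
satisfy `D_a * B_a = I_N`. -/
theorem birkhoff_case_a_DaBa_eq_one
    (N : ℕ) (hN : 1 ≤ N) (τ : Fin (N + 1) → ℝ) (hτ : StrictMono τ)
    (L B : Fin (N + 1) → Polynomial ℝ)
    (hLdeg : ∀ j, (L j).natDegree ≤ N)
    (hL : ∀ i j, (L j).eval (τ i) = if i = j then 1 else 0)
    (hBdeg : ∀ j, (B j).natDegree ≤ N)
    (hB00 : (B 0).eval (τ 0) = 1)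
    (hBj0 : ∀ j : Fin N, (B j.succ).eval (τ 0) = 0)
    (hB0' : ∀ i : Fin N, (derivative (B 0)).eval (τ i.succ) = 0)
    (hBj' : ∀ i j : Fin N,
      (derivative (B j.succ)).eval (τ i.succ) = if i = j then 1 else 0) :
    (Matrix.of fun i j : Fin N => (derivative (L j.succ)).eval (τ i.succ)) *
      (Matrix.of fun i j : Fin N => (B j.succ).eval (τ i.succ)) = 1 := by
  -- Key: any polynomial of natDegree ≤ N equals its Lagrange interpolant.
  have key : ∀ p : Polynomial ℝ, p.natDegree ≤ N →
      p = ∑ j : Fin (N + 1), Polynomial.C (p.eval (τ j)) * L j := by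
    intro p hp
    have hdiff : p - ∑ j : Fin (N + 1), Polynomial.C (p.eval (τ j)) * L j = 0 := by
      apply Polynomial.eq_zero_of_natDegree_lt_card_of_eval_eq_zero _ hτ.injective
      · intro i
        simp [eval_finset_sum, hL, Finset.sum_ite_eq]
      · have h1 : (∑ j : Fin (N + 1), Polynomial.C (p.eval (τ j)) * L j).natDegree ≤ N := by
          refine Polynomial.natDegree_sum_le_of_forall_le _ _ fun j _ => ?_
          exact le_trans (Polynomial.natDegree_mul_le) (by simpa using hLdeg j)
        calc (p - ∑ j : Fin (N + 1), Polynomial.C (p.eval (τ j)) * L j).natDegree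
            ≤ max p.natDegree _ := Polynomial.natDegree_sub_le _ _
          _ ≤ N := max_le hp h1
          _ < Fintype.card (Fin (N + 1)) := by simp
    exact (sub_eq_zero.mp hdiff)
  ext i k
  have hid := key (B k.succ) (hBdeg k.succ)
  have hderiv := congrArg (fun q => (derivative q).eval (τ i.succ)) hid
  simp only [derivative_sum, derivative_mul, derivative_C, zero_mul, zero_add,
    eval_finset_sum, eval_mul, eval_C] at hderiv
  rw [Fin.sum_univ_succ] at hderiv
  rw [hBj0 k, zero_mul, zero_add] at hderiv
  rw [Matrix.mul_apply]
  simp only [Matrix.of_apply, Matrix.one_apply]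
  rw [Finset.sum_congr rfl fun j (_ : j ∈ Finset.univ) =>
    mul_comm (eval (τ i.succ) (derivative (L j.succ))) (eval (τ j.succ) (B k.succ)), ← hderiv]
  exact hBj' i k
end

section
/- Let N ≥ 1 and let τ_0 < τ_1 < ... < τ_N be real numbers. Let B_0,...,B_N be a Case-(b) Birkhoff basis for these nodes. Define the N×N matrices D_b := (L_j'(τ_i))_{0≤i,j≤N−1} and B_b := (B_j(τ_i))_{0≤i,j≤N−1}. Then D_b · B_b = I_N, the N×N identity matrix. -/
open Polynomial Matrix

/-- Theorem 1 (Wang–Samson–Zhao), Case (b): for a Case-(b) Birkhoff basis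
`B₀,…,B_N` and Lagrange basis `L₀,…,L_N` on nodes `τ₀ < ⋯ < τ_N`,
the matrices `D_b := (L_j'(τ_i))_{0≤i,j≤N-1}` and `B_b := (B_j(τ_i))_{0≤i,j≤N-1}`
satisfy `D_b * B_b = I_N`. -/
theorem birkhoff_case_b_DbBb_eq_one
    (N : ℕ) (hN : 1 ≤ N) (τ : Fin (N + 1) → ℝ) (hτ : StrictMono τ)
    (L B : Fin (N + 1) → Polynomial ℝ)
    (hLdeg : ∀ j, (L j).natDegree ≤ N)
    (hL : ∀ i j, (L j).eval (τ i) = if i = j then 1 else 0)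
    (hBdeg : ∀ j, (B j).natDegree ≤ N)
    (hBNN : (B (Fin.last N)).eval (τ (Fin.last N)) = 1)
    (hBjN : ∀ j : Fin N, (B j.castSucc).eval (τ (Fin.last N)) = 0)
    (hBN' : ∀ i : Fin N, (derivative (B (Fin.last N))).eval (τ i.castSucc) = 0)
    (hBj' : ∀ i j : Fin N,
      (derivative (B j.castSucc)).eval (τ i.castSucc) = if i = j then 1 else 0) :
    (Matrix.of fun i j : Fin N => (derivative (L j.castSucc)).eval (τ i.castSucc)) *
      (Matrix.of fun i j : Fin N => (B j.castSucc).eval (τ i.castSucc)) = 1 := by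
  -- Lagrange interpolation: any polynomial of natDegree ≤ N is the sum of its
  -- values times the Lagrange basis.
  have interp : ∀ p : Polynomial ℝ, p.natDegree ≤ N →
      p = ∑ k : Fin (N + 1), Polynomial.C (p.eval (τ k)) * L k := by
    intro p hp
    have hq : p - ∑ k : Fin (N + 1), Polynomial.C (p.eval (τ k)) * L k = 0 := by
      apply Polynomial.eq_zero_of_natDegree_lt_card_of_eval_eq_zero _ hτ.injective
      · intro i
        simp only [Polynomial.eval_sub, Polynomial.eval_finset_sum, Polynomial.eval_mul,
          Polynomial.eval_C, hL]
        simp [Finset.sum_ite_eq]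
      · refine lt_of_le_of_lt (b := N) ?_ (by simp)
        apply le_trans (Polynomial.natDegree_sub_le _ _)
        apply max_le hp
        apply le_trans (Polynomial.natDegree_sum_le _ _)
        apply Finset.sup_le
        intro k _
        exact le_trans (Polynomial.natDegree_mul_le) (by simpa using hLdeg k)
    exact (sub_eq_zero.mp hq)
  ext i j
  have key := interp (B j.castSucc) (hBdeg _)
  have hder : derivative (B j.castSucc)
      = ∑ k : Fin (N + 1), Polynomial.C ((B j.castSucc).eval (τ k)) * derivative (L k) := by
    conv_lhs => rw [key]
    rw [derivative_sum]
    congr 1; funext k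
    simp [Polynomial.derivative_mul]
  have heval := congrArg (Polynomial.eval (τ i.castSucc)) hder
  rw [hBj' i j, Polynomial.eval_finset_sum] at heval
  simp only [Polynomial.eval_mul, Polynomial.eval_C] at heval
  rw [Fin.sum_univ_castSucc, hBjN j, zero_mul, add_zero] at heval
  rw [Matrix.mul_apply, Matrix.one_apply]
  simp only [Matrix.of_apply]
  rw [heval]
  apply Finset.sum_congr rfl
  intro k _
  ring
end

section
/- Let N ≥ 1 and let τ_0 < τ_1 < ... < τ_N be real numbers. Let B_0,...,B_N be a Case-(a) Birkhoff basis for these nodes, and define the N×N matrices D_a := (L_j'(τ_i))_{1≤i,j≤N} and B_a := (B_j(τ_i))_{1≤i,j≤N}. Then B_a is invertible and its inverse is D_a; in particular B_a · D_a = I_N as well as D_a · B_a = I_N. -/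
open Polynomial Matrix

/-- Lagrange interpolation: a polynomial of degree ≤ N equals the sum of its
values times the Lagrange basis polynomials. -/
lemma birkhoff_interp (N : ℕ) (τ : Fin (N + 1) → ℝ) (hτ : Function.Injective τ)
    (L : Fin (N + 1) → Polynomial ℝ)
    (hLdeg : ∀ j, (L j).natDegree ≤ N)
    (hL : ∀ i j, (L j).eval (τ i) = if i = j then 1 else 0)
    (p : Polynomial ℝ) (hp : p.natDegree ≤ N) :
    p = ∑ j, Polynomial.C (p.eval (τ j)) * L j := by
  have hq : p - ∑ j, Polynomial.C (p.eval (τ j)) * L j = 0 := by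
    apply Polynomial.eq_zero_of_natDegree_lt_card_of_eval_eq_zero _ hτ
    · intro i
      simp only [Polynomial.eval_sub, Polynomial.eval_finset_sum, Polynomial.eval_mul,
        Polynomial.eval_C, hL]
      simp
    · calc (p - ∑ j, Polynomial.C (p.eval (τ j)) * L j).natDegree
          ≤ max p.natDegree (∑ j, Polynomial.C (p.eval (τ j)) * L j).natDegree :=
            Polynomial.natDegree_sub_le _ _
        _ ≤ N := by
            apply max_le hp
            apply Polynomial.natDegree_sum_le_of_forall_le
            intro j _
            exact (Polynomial.natDegree_C_mul_le _ _).trans (hLdeg j)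
        _ < Fintype.card (Fin (N + 1)) := by simp
  exact (sub_eq_zero.mp hq)

/-- Case (a): the Birkhoff matrix `B_a := (B_j(τ_i))_{1≤i,j≤N}` is invertible
with inverse the differentiation matrix `D_a := (L_j'(τ_i))_{1≤i,j≤N}`;
in particular `B_a * D_a = I_N` as well as `D_a * B_a = I_N`. -/
theorem birkhoff_case_a_Ba_inv_eq_Da
    (N : ℕ) (hN : 1 ≤ N) (τ : Fin (N + 1) → ℝ) (hτ : StrictMono τ)
    (L B : Fin (N + 1) → Polynomial ℝ)
    (hLdeg : ∀ j, (L j).natDegree ≤ N)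
    (hL : ∀ i j, (L j).eval (τ i) = if i = j then 1 else 0)
    (hBdeg : ∀ j, (B j).natDegree ≤ N)
    (hB00 : (B 0).eval (τ 0) = 1)
    (hBj0 : ∀ j : Fin N, (B j.succ).eval (τ 0) = 0)
    (hB0' : ∀ i : Fin N, (derivative (B 0)).eval (τ i.succ) = 0)
    (hBj' : ∀ i j : Fin N,
      (derivative (B j.succ)).eval (τ i.succ) = if i = j then 1 else 0) :
    IsUnit (Matrix.of fun i j : Fin N => (B j.succ).eval (τ i.succ)) ∧
    (Matrix.of fun i j : Fin N => (B j.succ).eval (τ i.succ))⁻¹ =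
      (Matrix.of fun i j : Fin N => (derivative (L j.succ)).eval (τ i.succ)) ∧
    (Matrix.of fun i j : Fin N => (B j.succ).eval (τ i.succ)) *
      (Matrix.of fun i j : Fin N => (derivative (L j.succ)).eval (τ i.succ)) = 1 ∧
    (Matrix.of fun i j : Fin N => (derivative (L j.succ)).eval (τ i.succ)) *
      (Matrix.of fun i j : Fin N => (B j.succ).eval (τ i.succ)) = 1 := by
  set Dm : Matrix (Fin N) (Fin N) ℝ :=
    Matrix.of fun i j : Fin N => (derivative (L j.succ)).eval (τ i.succ) with hDm
  set Bm : Matrix (Fin N) (Fin N) ℝ :=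
    Matrix.of fun i j : Fin N => (B j.succ).eval (τ i.succ) with hBm
  have hDB : Dm * Bm = 1 := by
    ext i k
    have hinterp := birkhoff_interp N τ hτ.injective L hLdeg hL (B k.succ) (hBdeg k.succ)
    have hderiv : derivative (B k.succ) =
        ∑ j, Polynomial.C ((B k.succ).eval (τ j)) * derivative (L j) := by
      conv_lhs => rw [hinterp]
      rw [derivative_sum]
      simp [derivative_C_mul]
    have heval := congrArg (Polynomial.eval (τ i.succ)) hderiv
    rw [hBj' i k] at heval
    rw [Polynomial.eval_finset_sum] at heval
    simp only [Polynomial.eval_mul, Polynomial.eval_C] at heval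
    rw [Fin.sum_univ_succ, hBj0] at heval
    simp only [zero_mul, zero_add] at heval
    simp only [Matrix.mul_apply, Matrix.one_apply, hDm, hBm, Matrix.of_apply]
    rw [heval]
    exact Finset.sum_congr rfl fun j _ => mul_comm _ _
  have hBD : Bm * Dm = 1 := mul_eq_one_comm.mp hDB
  refine ⟨⟨⟨Bm, Dm, hBD, hDB⟩, rfl⟩, Matrix.inv_eq_left_inv hDB, hBD, hDB⟩
end

section
/- Let N ≥ 1, let τ_0 < τ_1 < ... < τ_N be real numbers, and let B_0,...,B_N be a Case-(a) Birkhoff basis for these nodes. Define the N×N matrix D_a := (L_j'(τ_i))_{1≤i,j≤N}, the vector b_0 := (B_0(τ_1),...,B_0(τ_N))ᵀ ∈ ℝ^N, and the vector l_0 := (L_0'(τ_1),...,L_0'(τ_N))ᵀ ∈ ℝ^N. Then D_a · b_0 + l_0 = 0, i.e., for every i = 1,...,N one has Σ_{k=1}^{N} L_k'(τ_i)·B_0(τ_k) + L_0'(τ_i) = 0. -/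
open Polynomial Matrix

/-- Proposition 2 (Case (a)): `D_a · b₀ + l₀ = 0`, i.e. for every `i = 1,…,N`,
`Σ_{k=1}^N L_k'(τ_i)·B₀(τ_k) + L₀'(τ_i) = 0`. -/
theorem birkhoff_case_a_Da_b0_add_l0_eq_zero
    (N : ℕ) (hN : 1 ≤ N) (τ : Fin (N + 1) → ℝ) (hτ : StrictMono τ)
    (L B : Fin (N + 1) → Polynomial ℝ)
    (hLdeg : ∀ j, (L j).natDegree ≤ N)
    (hL : ∀ i j, (L j).eval (τ i) = if i = j then 1 else 0)
    (hBdeg : ∀ j, (B j).natDegree ≤ N)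
    (hB00 : (B 0).eval (τ 0) = 1)
    (hBj0 : ∀ j : Fin N, (B j.succ).eval (τ 0) = 0)
    (hB0' : ∀ i : Fin N, (derivative (B 0)).eval (τ i.succ) = 0)
    (hBj' : ∀ i j : Fin N,
      (derivative (B j.succ)).eval (τ i.succ) = if i = j then 1 else 0) :
    (Matrix.of fun i j : Fin N => (derivative (L j.succ)).eval (τ i.succ)).mulVec
        (fun k : Fin N => (B 0).eval (τ k.succ)) +
      (fun i : Fin N => (derivative (L 0)).eval (τ i.succ)) = 0 := by
  -- B 0 equals its Lagrange interpolant
  set P : Polynomial ℝ :=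
    B 0 - ∑ j : Fin (N + 1), C ((B 0).eval (τ j)) * L j with hP
  have hPzero : P = 0 := by
    apply Polynomial.eq_zero_of_natDegree_lt_card_of_eval_eq_zero P hτ.injective
    · intro i
      simp only [hP, eval_sub, eval_finset_sum, eval_mul, eval_C, hL]
      rw [Finset.sum_eq_single i]
      · simp
      · intro b _ hb
        simp [hb.symm]
      · simp
    · refine lt_of_le_of_lt ?_ (by simp : N < Fintype.card (Fin (N + 1)))
      apply le_trans (Polynomial.natDegree_sub_le _ _)
      refine max_le (hBdeg 0) ?_
      refine le_trans (Polynomial.natDegree_sum_le _ _) ?_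
      apply Finset.sup_le
      intro j _
      exact le_trans (Polynomial.natDegree_mul_le) (by simpa using hLdeg j)
  have hB0eq : B 0 = ∑ j : Fin (N + 1), C ((B 0).eval (τ j)) * L j := by
    have := sub_eq_zero.mp hPzero
    exact this
  funext i
  have key : (derivative (B 0)).eval (τ i.succ)
      = ∑ j : Fin (N + 1), (B 0).eval (τ j) * (derivative (L j)).eval (τ i.succ) := by
    conv_lhs => rw [hB0eq]
    rw [derivative_sum, eval_finset_sum]
    apply Finset.sum_congr rfl
    intro j _
    simp [derivative_mul, mul_comm]
  rw [hB0' i] at key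
  rw [Fin.sum_univ_succ] at key
  simp only [hB00, one_mul] at key
  simp only [Pi.add_apply, Pi.zero_apply, mulVec, dotProduct, Matrix.of_apply]
  have : ∀ k : Fin N, (derivative (L k.succ)).eval (τ i.succ) * (B 0).eval (τ k.succ)
      = (B 0).eval (τ k.succ) * (derivative (L k.succ)).eval (τ i.succ) := fun k => mul_comm _ _
  rw [Finset.sum_congr rfl (fun k _ => this k)]
  linarith [key]
end

section
/- Let N ≥ 1, let τ_0 < τ_1 < ... < τ_N be real numbers, and let B_0,...,B_N be a Case-(b) Birkhoff basis for these nodes. Define the N×N matrix D_b := (L_j'(τ_i))_{0≤i,j≤N−1}, the vector b_N := (B_N(τ_0),...,B_N(τ_{N−1}))ᵀ ∈ ℝ^N, and the vector l_N := (L_N'(τ_0),...,L_N'(τ_{N−1}))ᵀ ∈ ℝ^N. Then D_b · b_N + l_N = 0, i.e., for every i = 0,...,N−1 one has Σ_{k=0}^{N−1} L_k'(τ_i)·B_N(τ_k) + L_N'(τ_i) = 0. -/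
open Polynomial Matrix

/-- Proposition 2 analogue (Case (b)): `D_b · b_N + l_N = 0`, i.e. for every
`i = 0,…,N-1`, `Σ_{k=0}^{N-1} L_k'(τ_i)·B_N(τ_k) + L_N'(τ_i) = 0`. -/
theorem birkhoff_case_b_Db_bN_add_lN_eq_zero
    (N : ℕ) (hN : 1 ≤ N) (τ : Fin (N + 1) → ℝ) (hτ : StrictMono τ)
    (L B : Fin (N + 1) → Polynomial ℝ)
    (hLdeg : ∀ j, (L j).natDegree ≤ N)
    (hL : ∀ i j, (L j).eval (τ i) = if i = j then 1 else 0)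
    (hBdeg : ∀ j, (B j).natDegree ≤ N)
    (hBNN : (B (Fin.last N)).eval (τ (Fin.last N)) = 1)
    (hBjN : ∀ j : Fin N, (B j.castSucc).eval (τ (Fin.last N)) = 0)
    (hBN' : ∀ i : Fin N, (derivative (B (Fin.last N))).eval (τ i.castSucc) = 0)
    (hBj' : ∀ i j : Fin N,
      (derivative (B j.castSucc)).eval (τ i.castSucc) = if i = j then 1 else 0) :
    (Matrix.of fun i j : Fin N => (derivative (L j.castSucc)).eval (τ i.castSucc)).mulVec
        (fun k : Fin N => (B (Fin.last N)).eval (τ k.castSucc)) +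
      (fun i : Fin N => (derivative (L (Fin.last N))).eval (τ i.castSucc)) = 0 := by
  -- B_N = Σ_j B_N(τ_j) • L_j
  have key : B (Fin.last N) =
      ∑ j : Fin (N + 1), C ((B (Fin.last N)).eval (τ j)) * L j := by
    have hsub : B (Fin.last N) - ∑ j : Fin (N + 1),
        C ((B (Fin.last N)).eval (τ j)) * L j = 0 := by
      apply Polynomial.eq_zero_of_natDegree_lt_card_of_eval_eq_zero _ hτ.injective
      · intro i
        simp only [eval_sub, eval_finset_sum, eval_mul, eval_C, hL]
        rw [Finset.sum_eq_single i]
        · simp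
        · intro b _ hb
          simp [(Ne.symm hb)]
        · simp
      · refine lt_of_le_of_lt ?_ (by simp : N < Fintype.card (Fin (N + 1)))
        refine (Polynomial.natDegree_sub_le _ _).trans ?_
        refine max_le (hBdeg _) ?_
        refine Polynomial.natDegree_sum_le_of_forall_le _ _ fun j _ =>
          (Polynomial.natDegree_mul_le).trans (by simpa using hLdeg j)
    linear_combination hsub
  funext i
  have h0 := hBN' i
  rw [key] at h0
  rw [Fin.sum_univ_castSucc, hBNN] at h0
  simp only [derivative_add, derivative_sum, derivative_mul, derivative_C, zero_mul, zero_add,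
    eval_add, eval_finset_sum, eval_mul, eval_C, one_mul, Polynomial.C_1] at h0
  simp only [Pi.add_apply, Matrix.mulVec, dotProduct, Matrix.of_apply, Pi.zero_apply]
  rw [← h0]
  congr 1
  exact Finset.sum_congr rfl fun k _ => by ring
end

section
/- Let N ≥ 1, let τ_0 < τ_1 < ... < τ_N be real numbers, and let B_0,...,B_N be a Case-(a) Birkhoff basis for these nodes. Define the N×N matrix B_a := (B_j(τ_i))_{1≤i,j≤N}, the vector b_0 := (B_0(τ_1),...,B_0(τ_N))ᵀ ∈ ℝ^N, and the vector l_0 := (L_0'(τ_1),...,L_0'(τ_N))ᵀ ∈ ℝ^N. Then b_0 = −B_a · l_0. -/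
open Polynomial Matrix

/-- Case (a): the vector `b₀ := (B₀(τ_1),…,B₀(τ_N))ᵀ` satisfies
`b₀ = −B_a · l₀` where `B_a := (B_j(τ_i))_{1≤i,j≤N}` and
`l₀ := (L₀'(τ_1),…,L₀'(τ_N))ᵀ`. -/
theorem birkhoff_case_a_b0_eq_neg_Ba_l0
    (N : ℕ) (hN : 1 ≤ N) (τ : Fin (N + 1) → ℝ) (hτ : StrictMono τ)
    (L B : Fin (N + 1) → Polynomial ℝ)
    (hLdeg : ∀ j, (L j).natDegree ≤ N)
    (hL : ∀ i j, (L j).eval (τ i) = if i = j then 1 else 0)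
    (hBdeg : ∀ j, (B j).natDegree ≤ N)
    (hB00 : (B 0).eval (τ 0) = 1)
    (hBj0 : ∀ j : Fin N, (B j.succ).eval (τ 0) = 0)
    (hB0' : ∀ i : Fin N, (derivative (B 0)).eval (τ i.succ) = 0)
    (hBj' : ∀ i j : Fin N,
      (derivative (B j.succ)).eval (τ i.succ) = if i = j then 1 else 0) :
    (fun i : Fin N => (B 0).eval (τ i.succ)) =
      -(Matrix.of fun i j : Fin N => (B j.succ).eval (τ i.succ)).mulVec
        (fun k : Fin N => (derivative (L 0)).eval (τ k.succ)) := by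
  set l : Fin N → ℝ := fun k => (derivative (L 0)).eval (τ k.succ) with hl
  set Q : Polynomial ℝ :=
    B 0 + ∑ k : Fin N, C (l k) * B k.succ - L 0 with hQ
  have hQdeg : Q.natDegree ≤ N := by
    refine (natDegree_sub_le _ _).trans (max_le ?_ (hLdeg 0))
    refine (natDegree_add_le _ _).trans (max_le (hBdeg 0) ?_)
    refine (natDegree_sum_le _ _).trans ?_
    exact (Finset.fold_max_le N).mpr ⟨Nat.zero_le _,
      fun k _ => (natDegree_C_mul_le _ _).trans (hBdeg k.succ)⟩
  have hQ'eval : ∀ i : Fin N, (derivative Q).eval (τ i.succ) = 0 := by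
    intro i
    simp only [hQ, derivative_sub, derivative_add, derivative_sum,
      derivative_C_mul, eval_sub, eval_add, eval_finset_sum, eval_mul, eval_C,
      hB0' i, hBj' i]
    simp [hl]
  have hQ' : derivative Q = 0 := by
    apply Polynomial.eq_zero_of_natDegree_lt_card_of_eval_eq_zero
      (derivative Q)
      (f := fun i : Fin N => τ i.succ)
      (fun i j h => Fin.succ_injective N (hτ.injective h)) hQ'eval
    calc (derivative Q).natDegree ≤ Q.natDegree - 1 := natDegree_derivative_le Q
    _ < N := by omega
    _ = Fintype.card (Fin N) := by simp
  have hQ0 : Q.natDegree = 0 := natDegree_eq_zero_of_derivative_eq_zero hQ'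
  obtain ⟨c, hc⟩ := Polynomial.natDegree_eq_zero.mp hQ0
  have hτ0 : Q.eval (τ 0) = 0 := by
    simp [hQ, eval_finset_sum, hB00, hBj0, hL 0 0]
  rw [← hc] at hτ0
  simp at hτ0
  have hQzero : Q = 0 := by rw [← hc, hτ0, map_zero]
  funext i
  have hi : Q.eval (τ i.succ) = 0 := by rw [hQzero]; simp
  have hLi : (L 0).eval (τ i.succ) = 0 := by
    rw [hL]; simp [Fin.succ_ne_zero]
  simp only [hQ, eval_sub, eval_add, eval_finset_sum, eval_mul, eval_C, hLi,
    sub_zero] at hi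
  simp only [Pi.neg_apply, mulVec, dotProduct, Matrix.of_apply]
  have := hi
  linarith [hi, Finset.sum_congr rfl (fun k (_ : k ∈ Finset.univ) =>
    (mul_comm (l k) ((B k.succ).eval (τ i.succ))))]
end

section
/- Let N ≥ 1, let τ_0 < τ_1 < ... < τ_N be real numbers, and let B_0,...,B_N be a Case-(a) Birkhoff basis for these nodes. Define B_a := (B_j(τ_i))_{1≤i,j≤N}, b_0 := (B_0(τ_1),...,B_0(τ_N))ᵀ, l_0 := (L_0'(τ_1),...,L_0'(τ_N))ᵀ, and the row vector I_a := (B_1'(τ_0),...,B_N'(τ_0)). Fix real numbers x_0 and F_0, and vectors X_a = (x_1,...,x_N)ᵀ ∈ ℝ^N and F ∈ ℝ^N. Then there exists V_a ∈ ℝ^N satisfying the three conditions (i) V_a = F, (ii) X_a = x_0·b_0 + B_a·V_a, and (iii) I_a·V_a = F_0 − x_0·B_0'(τ_0), if and only if the two conditions (i') Σ_{i=0}^{N} x_i·L_i'(τ_0) = F_0 and (ii') X_a = B_a·F − x_0·B_a·l_0 hold. -/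
open Polynomial Matrix

section Aux

variable {N : ℕ} {τ : Fin (N + 1) → ℝ} (hτ : StrictMono τ)
variable {L : Fin (N + 1) → Polynomial ℝ}
variable (hLdeg : ∀ j, (L j).natDegree ≤ N)
variable (hL : ∀ i j, (L j).eval (τ i) = if i = j then 1 else 0)

include hτ hLdeg hL in
/-- Lagrange representation. -/
lemma interp_eq (p : Polynomial ℝ) (hp : p.natDegree ≤ N) :
    p = ∑ i, Polynomial.C (p.eval (τ i)) * L i := by
  have hsub : (p - ∑ i, Polynomial.C (p.eval (τ i)) * L i) = 0 := by
    apply Polynomial.eq_zero_of_natDegree_lt_card_of_eval_eq_zero _ hτ.injective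
    · intro k
      simp only [eval_sub, eval_finset_sum, eval_mul, eval_C, hL]
      simp [Finset.sum_ite_eq]
    · calc (p - ∑ i, Polynomial.C (p.eval (τ i)) * L i).natDegree
          ≤ max p.natDegree (∑ i, Polynomial.C (p.eval (τ i)) * L i).natDegree :=
            natDegree_sub_le _ _
        _ ≤ N := by
            apply max_le hp
            apply natDegree_sum_le_of_forall_le
            intro i _
            exact le_trans (natDegree_mul_le) (by simpa using hLdeg i)
        _ < Fintype.card (Fin (N + 1)) := by simp
  linear_combination (norm := ring_nf) hsub

include hτ hLdeg hL in
lemma deriv_interp (p : Polynomial ℝ) (hp : p.natDegree ≤ N) (s : ℝ) :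
    (derivative p).eval s = ∑ i, p.eval (τ i) * (derivative (L i)).eval s := by
  conv_lhs => rw [interp_eq hτ hLdeg hL p hp]
  rw [map_sum, eval_finset_sum]
  refine Finset.sum_congr rfl fun i _ => ?_
  rw [derivative_C_mul, eval_C_mul]

include hτ in
lemma birkhoff_unique_a (hN : 1 ≤ N) (q : Polynomial ℝ) (hq : q.natDegree ≤ N)
    (h0 : q.eval (τ 0) = 0)
    (h' : ∀ i : Fin N, (derivative q).eval (τ i.succ) = 0) : q = 0 := by
  have hd : derivative q = 0 := by
    have : Fintype.card (Fin N) = N := by simp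
    have hinj : Function.Injective (fun i : Fin N => τ i.succ) :=
      fun i j hij => Fin.succ_injective N (hτ.injective hij)
    apply Polynomial.eq_zero_of_natDegree_lt_card_of_eval_eq_zero (derivative q) hinj h'
    calc (derivative q).natDegree ≤ q.natDegree - 1 := natDegree_derivative_le q
      _ < N := by omega
      _ = Fintype.card (Fin N) := by simp
  obtain ⟨c, rfl⟩ := Polynomial.natDegree_eq_zero.mp
    (natDegree_eq_zero_of_derivative_eq_zero hd)
  simp only [eval_C] at h0
  simp [h0]

end Aux

lemma key_poly {N : ℕ} {τ : Fin (N + 1) → ℝ} (hτ : StrictMono τ) (hN : 1 ≤ N)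
    {L B : Fin (N + 1) → Polynomial ℝ}
    (hLdeg : ∀ j, (L j).natDegree ≤ N)
    (hL : ∀ i j, (L j).eval (τ i) = if i = j then 1 else 0)
    (hBdeg : ∀ j, (B j).natDegree ≤ N)
    (hB00 : (B 0).eval (τ 0) = 1)
    (hBj0 : ∀ j : Fin N, (B j.succ).eval (τ 0) = 0)
    (hB0' : ∀ i : Fin N, (derivative (B 0)).eval (τ i.succ) = 0)
    (hBj' : ∀ i j : Fin N,
      (derivative (B j.succ)).eval (τ i.succ) = if i = j then 1 else 0) :
    B 0 + ∑ j : Fin N, Polynomial.C ((derivative (L 0)).eval (τ j.succ)) * B j.succ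
      = L 0 := by
  set P : Polynomial ℝ :=
    B 0 + ∑ j : Fin N, Polynomial.C ((derivative (L 0)).eval (τ j.succ)) * B j.succ - L 0
    with hP
  have hPz : P = 0 := by
    apply birkhoff_unique_a hτ hN
    · calc P.natDegree
          ≤ max (B 0 + ∑ j : Fin N,
              Polynomial.C ((derivative (L 0)).eval (τ j.succ)) * B j.succ).natDegree
            (L 0).natDegree := natDegree_sub_le _ _
        _ ≤ N := by
            apply max_le _ (hLdeg 0)
            apply le_trans (natDegree_add_le _ _)
            apply max_le (hBdeg 0)
            apply natDegree_sum_le_of_forall_le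
            intro j _
            exact le_trans natDegree_mul_le (by simpa using hBdeg j.succ)
    · simp only [hP, eval_sub, eval_add, eval_finset_sum, eval_mul, eval_C,
        hB00, hBj0, hL]
      simp
    · intro i
      simp only [hP, derivative_sub, derivative_add, derivative_sum, derivative_C_mul,
        eval_sub, eval_add, eval_finset_sum, eval_C_mul, hB0' i, hBj']
      have hLi : (L 0).eval (τ i.succ) = 0 := by
        rw [hL]; simp [Fin.succ_ne_zero]
      have : ∑ j : Fin N, (derivative (L 0)).eval (τ j.succ) *
          (if i = j then (1:ℝ) else 0) = (derivative (L 0)).eval (τ i.succ) := by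
        simp [Finset.sum_ite_eq]
      rw [this]
      -- remaining: 0 + L0'(τ_i.succ) - (derivative (L 0)).eval (τ i.succ) = 0
      ring
  have := hPz
  rw [hP, sub_eq_zero] at this
  exact this


/-- Proposition 3: eliminating `V_a` from the right-preconditioned problem
reduces it to the left-preconditioned problem.  There exists `V_a` with
(i) `V_a = F`, (ii) `X_a = x₀·b₀ + B_a·V_a`, (iii) `I_a·V_a = F₀ − x₀·B₀'(τ₀)`
iff (i') `Σ_{i=0}^N x_i·L_i'(τ₀) = F₀` and (ii') `X_a = B_a·F − x₀·B_a·l₀`. -/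
theorem birkhoff_right_precond_iff_left_precond_case_a
    (N : ℕ) (hN : 1 ≤ N) (τ : Fin (N + 1) → ℝ) (hτ : StrictMono τ)
    (L B : Fin (N + 1) → Polynomial ℝ)
    (hLdeg : ∀ j, (L j).natDegree ≤ N)
    (hL : ∀ i j, (L j).eval (τ i) = if i = j then 1 else 0)
    (hBdeg : ∀ j, (B j).natDegree ≤ N)
    (hB00 : (B 0).eval (τ 0) = 1)
    (hBj0 : ∀ j : Fin N, (B j.succ).eval (τ 0) = 0)
    (hB0' : ∀ i : Fin N, (derivative (B 0)).eval (τ i.succ) = 0)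
    (hBj' : ∀ i j : Fin N,
      (derivative (B j.succ)).eval (τ i.succ) = if i = j then 1 else 0)
    (x0 F0 : ℝ) (Xa F : Fin N → ℝ) :
    (∃ Va : Fin N → ℝ,
      Va = F ∧
      Xa = x0 • (fun i : Fin N => (B 0).eval (τ i.succ)) +
        (Matrix.of fun i j : Fin N => (B j.succ).eval (τ i.succ)).mulVec Va ∧
      (fun j : Fin N => (derivative (B j.succ)).eval (τ 0)) ⬝ᵥ Va =
        F0 - x0 * (derivative (B 0)).eval (τ 0)) ↔
    (x0 * (derivative (L 0)).eval (τ 0) +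
        ∑ i : Fin N, Xa i * (derivative (L i.succ)).eval (τ 0) = F0 ∧
      Xa = (Matrix.of fun i j : Fin N => (B j.succ).eval (τ i.succ)).mulVec F -
        x0 • (Matrix.of fun i j : Fin N => (B j.succ).eval (τ i.succ)).mulVec
          (fun k : Fin N => (derivative (L 0)).eval (τ k.succ))) := by
  have hkey := key_poly hτ hN hLdeg hL hBdeg hB00 hBj0 hB0' hBj'
  -- (I1): b₀ = −B_a l₀ pointwise
  have hb0 : ∀ k : Fin N, (B 0).eval (τ k.succ) =
      - ∑ j : Fin N, (B j.succ).eval (τ k.succ) * (derivative (L 0)).eval (τ j.succ) := by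
    intro k
    have h := congrArg (Polynomial.eval (τ k.succ)) hkey
    simp only [eval_add, eval_finset_sum, eval_mul, eval_C] at h
    have hL0 : (L 0).eval (τ k.succ) = 0 := by
      rw [hL]; simp [Fin.succ_ne_zero]
    rw [hL0] at h
    have hs : ∑ j : Fin N, (B j.succ).eval (τ k.succ) * (derivative (L 0)).eval (τ j.succ)
        = ∑ j : Fin N, (derivative (L 0)).eval (τ j.succ) * (B j.succ).eval (τ k.succ) :=
      Finset.sum_congr rfl fun j _ => mul_comm _ _
    rw [hs]; linarith
  -- (I2)
  have hI2 : ∀ j : Fin N, (derivative (B j.succ)).eval (τ 0) =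
      ∑ i : Fin N, (B j.succ).eval (τ i.succ) * (derivative (L i.succ)).eval (τ 0) := by
    intro j
    have h := deriv_interp hτ hLdeg hL (B j.succ) (hBdeg _) (τ 0)
    rw [Fin.sum_univ_succ, hBj0 j] at h
    simpa using h
  -- (I3)
  have hI3 : (derivative (B 0)).eval (τ 0) = (derivative (L 0)).eval (τ 0) +
      ∑ i : Fin N, (B 0).eval (τ i.succ) * (derivative (L i.succ)).eval (τ 0) := by
    have h := deriv_interp hτ hLdeg hL (B 0) (hBdeg _) (τ 0)
    rw [Fin.sum_univ_succ, hB00] at h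
    simpa using h
  -- vector identity: x₀ b₀ + B_a F = B_a F − x₀ B_a l₀
  have hvec : x0 • (fun i : Fin N => (B 0).eval (τ i.succ)) +
        (Matrix.of fun i j : Fin N => (B j.succ).eval (τ i.succ)).mulVec F =
      (Matrix.of fun i j : Fin N => (B j.succ).eval (τ i.succ)).mulVec F -
        x0 • (Matrix.of fun i j : Fin N => (B j.succ).eval (τ i.succ)).mulVec
          (fun k : Fin N => (derivative (L 0)).eval (τ k.succ)) := by
    funext i
    simp only [Pi.add_apply, Pi.sub_apply, Pi.smul_apply, smul_eq_mul,
      Matrix.mulVec, dotProduct, Matrix.of_apply]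
    rw [hb0 i]
    ring
  -- scalar identity under (ii)
  have hS : Xa = x0 • (fun i : Fin N => (B 0).eval (τ i.succ)) +
        (Matrix.of fun i j : Fin N => (B j.succ).eval (τ i.succ)).mulVec F →
      x0 * (derivative (L 0)).eval (τ 0) +
        ∑ i : Fin N, Xa i * (derivative (L i.succ)).eval (τ 0) =
      (∑ j : Fin N, (derivative (B j.succ)).eval (τ 0) * F j) +
        x0 * (derivative (B 0)).eval (τ 0) := by
    intro hXa
    simp only [hXa, Pi.add_apply, Pi.smul_apply, smul_eq_mul,
      Matrix.mulVec, dotProduct, Matrix.of_apply]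
    have h1 : ∑ i : Fin N, (x0 * (B 0).eval (τ i.succ) +
          ∑ j : Fin N, (B j.succ).eval (τ i.succ) * F j) *
            (derivative (L i.succ)).eval (τ 0)
        = x0 * (∑ i : Fin N, (B 0).eval (τ i.succ) * (derivative (L i.succ)).eval (τ 0))
          + ∑ i : Fin N, (∑ j : Fin N, (B j.succ).eval (τ i.succ) * F j) *
              (derivative (L i.succ)).eval (τ 0) := by
      rw [Finset.mul_sum, ← Finset.sum_add_distrib]
      exact Finset.sum_congr rfl fun i _ => by ring
    have h2 : ∑ i : Fin N, (∑ j : Fin N, (B j.succ).eval (τ i.succ) * F j) *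
          (derivative (L i.succ)).eval (τ 0)
        = ∑ j : Fin N, (derivative (B j.succ)).eval (τ 0) * F j := by
      simp only [Finset.sum_mul]
      rw [Finset.sum_comm]
      refine Finset.sum_congr rfl fun j _ => ?_
      rw [hI2 j, Finset.sum_mul]
      exact Finset.sum_congr rfl fun i _ => by ring
    rw [h1, h2, hI3]
    ring
  constructor
  · rintro ⟨Va, rfl, hii, hiii⟩
    have hXa2 := hii.trans hvec
    refine ⟨?_, hXa2⟩
    rw [hS hii]
    simp only [dotProduct] at hiii
    linarith [hiii]
  · rintro ⟨hi', hii'⟩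
    have hXa : Xa = x0 • (fun i : Fin N => (B 0).eval (τ i.succ)) +
        (Matrix.of fun i j : Fin N => (B j.succ).eval (τ i.succ)).mulVec F :=
      hii'.trans hvec.symm
    refine ⟨F, rfl, hXa, ?_⟩
    simp only [dotProduct]
    rw [hS hXa] at hi'
    linarith
end

section
/- Let N ≥ 1 and let τ_0 < τ_1 < ... < τ_N be real numbers. For any real numbers c, d_1,...,d_N there exists a unique real polynomial p of degree ≤ N such that p(τ_0) = c and p'(τ_j) = d_j for j = 1,...,N. -/
open Polynomial

/-- Existence and uniqueness of the Case-(a) Birkhoff interpolant: for nodes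
`τ₀ < τ₁ < ⋯ < τ_N` and data `c, d₁,…,d_N`, there is a unique polynomial `p`
of degree ≤ N with `p(τ₀) = c` and `p'(τ_j) = d_j` for `j = 1,…,N`. -/
theorem birkhoff_interpolant_case_a_existsUnique
    (N : ℕ) (hN : 1 ≤ N) (τ : Fin (N + 1) → ℝ) (hτ : StrictMono τ)
    (c : ℝ) (d : Fin N → ℝ) :
    ∃! p : Polynomial ℝ, p.natDegree ≤ N ∧ p.eval (τ 0) = c ∧
      ∀ j : Fin N, (derivative p).eval (τ j.succ) = d j := by
  classical
  set V := Polynomial.degreeLT ℝ (N + 1) with hV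
  -- the evaluation linear map
  set L : V →ₗ[ℝ] (Fin (N + 1) → ℝ) :=
    (LinearMap.pi fun i : Fin (N + 1) =>
      if i = 0 then Polynomial.leval (τ 0)
      else (Polynomial.leval (τ i)).comp (Polynomial.derivative : ℝ[X] →ₗ[ℝ] ℝ[X])).comp
      V.subtype with hL
  have hLapp : ∀ (p : V) (i : Fin (N + 1)), L p i =
      if i = 0 then (p : ℝ[X]).eval (τ 0)
      else (Polynomial.derivative (p : ℝ[X])).eval (τ i) := by
    intro p i
    by_cases h : i = 0 <;> simp [hL, h]
  have hmem : ∀ p : ℝ[X], p.natDegree ≤ N → p ∈ V := by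
    intro p hp
    rw [hV, Polynomial.degreeLT_succ_eq_degreeLE, Polynomial.mem_degreeLE]
    exact Polynomial.natDegree_le_iff_degree_le.mp hp
  -- injectivity
  have hinj : Function.Injective L := by
    rw [← LinearMap.ker_eq_bot, LinearMap.ker_eq_bot']
    intro p hp
    have h0 : (p : ℝ[X]).eval (τ 0) = 0 := by
      have := congrFun hp 0
      simpa [hLapp] using this
    have hder : ∀ j : Fin N, (Polynomial.derivative (p : ℝ[X])).eval (τ j.succ) = 0 := by
      intro j
      have := congrFun hp j.succ
      simpa [hLapp, Fin.succ_ne_zero] using this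
    have hpdeg : (p : ℝ[X]).natDegree ≤ N := by
      have := Polynomial.mem_degreeLT.mp p.2
      rcases eq_or_ne (p : ℝ[X]) 0 with h | h
      · simp [h]
      · exact Nat.lt_succ_iff.mp ((Polynomial.natDegree_lt_iff_degree_lt h).mpr this)
    have hd0 : Polynomial.derivative (p : ℝ[X]) = 0 := by
      apply Polynomial.eq_zero_of_natDegree_lt_card_of_eval_eq_zero _
        (f := fun j : Fin N => τ j.succ)
        (fun a b hab => Fin.succ_injective _ (hτ.injective hab)) hder
      have h1 : (Polynomial.derivative (p : ℝ[X])).natDegree ≤ N - 1 :=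
        le_trans (Polynomial.natDegree_derivative_le _) (Nat.sub_le_sub_right hpdeg 1)
      have h2 : N - 1 < N := Nat.sub_lt (lt_of_lt_of_le one_pos hN) one_pos
      simpa using lt_of_le_of_lt h1 h2
    have hnd : (p : ℝ[X]).natDegree = 0 :=
      Polynomial.natDegree_eq_zero_of_derivative_eq_zero hd0
    obtain ⟨a, ha⟩ := Polynomial.natDegree_eq_zero.mp hnd
    have : (p : ℝ[X]) = 0 := by
      rw [← ha] at h0 ⊢
      simp at h0
      simp [h0]
    exact Subtype.ext this
  -- surjectivity via dimension count
  have hdim : Module.finrank ℝ V = Module.finrank ℝ (Fin (N + 1) → ℝ) :=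
    (Polynomial.degreeLTEquiv ℝ (N + 1)).finrank_eq
  have : FiniteDimensional ℝ V :=
    Module.Finite.equiv (Polynomial.degreeLTEquiv ℝ (N + 1)).symm
  have hsurj : Function.Surjective L :=
    (LinearMap.injective_iff_surjective_of_finrank_eq_finrank hdim).mp hinj
  obtain ⟨p, hp⟩ := hsurj (Fin.cons c fun j => d j)
  refine ⟨(p : ℝ[X]), ⟨?_, ?_, ?_⟩, ?_⟩
  · have := Polynomial.mem_degreeLT.mp p.2
    rcases eq_or_ne (p : ℝ[X]) 0 with h | h
    · simp [h]
    · exact Nat.lt_succ_iff.mp ((Polynomial.natDegree_lt_iff_degree_lt h).mpr this)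
  · have := congrFun hp 0
    simpa [hLapp] using this
  · intro j
    have := congrFun hp j.succ
    simpa [hLapp, Fin.succ_ne_zero] using this
  · rintro q ⟨hq1, hq2, hq3⟩
    have hqV : q ∈ V := hmem q hq1
    have : L ⟨q, hqV⟩ = L p := by
      rw [hp]
      funext i
      rw [hLapp]
      refine Fin.cases ?_ ?_ i
      · simpa using hq2
      · intro j
        simpa [Fin.succ_ne_zero] using hq3 j
    exact congrArg Subtype.val (hinj this)
end

section
/- Let N ≥ 1 and let τ_0 < τ_1 < ... < τ_N be real numbers. For any real numbers c, d_0,...,d_{N−1} there exists a unique real polynomial p of degree ≤ N such that p(τ_N) = c and p'(τ_j) = d_j for j = 0,...,N−1. -/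
open Polynomial
open Finset in
lemma exists_antideriv (q : ℝ[X]) :
    ∃ P : ℝ[X], derivative P = q ∧ P.natDegree ≤ q.natDegree + 1 := by
  refine ⟨∑ n ∈ range (q.natDegree + 1), C (q.coeff n / (n + 1)) * X ^ (n + 1), ?_, ?_⟩
  · rw [map_sum]
    have : ∀ n ∈ range (q.natDegree + 1),
        derivative (C (q.coeff n / (n + 1)) * X ^ (n + 1)) = C (q.coeff n) * X ^ n := by
      intro n _
      rw [derivative_C_mul, derivative_X_pow]
      push_cast
      rw [← mul_assoc, ← C_mul, div_mul_cancel₀]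
      positivity
    rw [Finset.sum_congr rfl this]
    conv_rhs => rw [q.as_sum_range' (q.natDegree + 1) (Nat.lt_succ_self _)]
    simp [C_mul_X_pow_eq_monomial]
  · refine natDegree_sum_le_of_forall_le _ _ fun n hn => ?_
    calc (C (q.coeff n / (n + 1)) * X ^ (n + 1)).natDegree ≤ n + 1 := by
          exact (natDegree_C_mul_le _ _).trans (by simp)
      _ ≤ q.natDegree + 1 := by simp at hn; omega


/-- Existence and uniqueness of the Case-(b) Birkhoff interpolant: for nodes
`τ₀ < τ₁ < ⋯ < τ_N` and data `c, d₀,…,d_{N−1}`, there is a unique polynomial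
`p` of degree ≤ N with `p(τ_N) = c` and `p'(τ_j) = d_j` for `j = 0,…,N−1`. -/
theorem birkhoff_interpolant_case_b_existsUnique
    (N : ℕ) (hN : 1 ≤ N) (τ : Fin (N + 1) → ℝ) (hτ : StrictMono τ)
    (c : ℝ) (d : Fin N → ℝ) :
    ∃! p : Polynomial ℝ, p.natDegree ≤ N ∧ p.eval (τ (Fin.last N)) = c ∧
      ∀ j : Fin N, (derivative p).eval (τ j.castSucc) = d j := by
  set v : Fin N → ℝ := fun j => τ j.castSucc with hv
  have hvinj : Set.InjOn v (Finset.univ : Finset (Fin N)) := by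
    intro a _ b _ hab
    exact Fin.castSucc_injective N (hτ.injective hab)
  -- existence
  set q : ℝ[X] := Lagrange.interpolate Finset.univ v d with hq
  have hqdeg : q.degree < (N : WithBot ℕ) := by
    simpa [hq] using Lagrange.degree_interpolate_lt d hvinj
  have hqnat : q.natDegree + 1 ≤ N := by
    rcases eq_or_ne q 0 with h | h
    · simpa [h] using hN
    · have := (degree_eq_natDegree h) ▸ hqdeg
      exact_mod_cast Nat.succ_le_of_lt (by exact_mod_cast this)
  obtain ⟨P, hPd, hPdeg⟩ := exists_antideriv q
  refine ⟨P + C (c - P.eval (τ (Fin.last N))), ⟨?_, by simp, ?_⟩, ?_⟩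
  · calc (P + C (c - P.eval (τ (Fin.last N)))).natDegree
        ≤ max P.natDegree (C (c - P.eval (τ (Fin.last N)))).natDegree := natDegree_add_le _ _
      _ ≤ N := by simp; omega
  · intro j
    rw [derivative_add, derivative_C, add_zero, hPd]
    exact Lagrange.eval_interpolate_at_node d hvinj (Finset.mem_univ j)
  · rintro p ⟨hpdeg, hpev, hpder⟩
    set r := p - (P + C (c - P.eval (τ (Fin.last N)))) with hr
    have hder0 : derivative r = 0 := by
      apply Polynomial.eq_zero_of_degree_lt_of_eval_index_eq_zero
        (v := v) (Finset.univ : Finset (Fin N)) hvinj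
      · calc (derivative r).degree ≤ ((derivative r).natDegree : WithBot ℕ) :=
              degree_le_natDegree
          _ < (N : WithBot ℕ) := by
              have h1 : (derivative r).natDegree ≤ r.natDegree - 1 := natDegree_derivative_le r
              have h2 : r.natDegree ≤ N := by
                refine (natDegree_sub_le _ _).trans ?_
                simp only [max_le_iff]
                refine ⟨hpdeg, ?_⟩
                calc (P + C (c - P.eval (τ (Fin.last N)))).natDegree
                    ≤ max P.natDegree (C (c - P.eval (τ (Fin.last N)))).natDegree :=
                      natDegree_add_le _ _
                  _ ≤ N := by simp; omega
              exact_mod_cast (by omega : (derivative r).natDegree < N)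
          _ = (((Finset.univ : Finset (Fin N)).card : ℕ) : WithBot ℕ) := by simp
      · intro j _
        rw [hr, derivative_sub, eval_sub, hpder j, derivative_add, derivative_C, add_zero,
          hPd, Lagrange.eval_interpolate_at_node d hvinj (Finset.mem_univ j), sub_self]
    have hrC : r = C (r.coeff 0) := eq_C_of_natDegree_eq_zero
      (natDegree_eq_zero_of_derivative_eq_zero hder0)
    have : r.eval (τ (Fin.last N)) = 0 := by
      rw [hr]; simp [hpev]
    rw [hrC] at this
    simp only [eval_C] at this
    have : r = 0 := by rw [hrC, this, map_zero]
    exact sub_eq_zero.mp (hr ▸ this)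
end

section
/- Let N ≥ 1, let τ_0 < τ_1 < ... < τ_N be real numbers, and let B_0,...,B_N be a Case-(a) Birkhoff basis for these nodes. Then for every real polynomial p of degree ≤ N one has the identity of polynomials p = p(τ_0)·B_0 + Σ_{j=1}^{N} p'(τ_j)·B_j. -/
open Polynomial

/-- Case (a): the Birkhoff expansion reproduces every polynomial of degree ≤ N:
`p = p(τ₀)·B₀ + Σ_{j=1}^N p'(τ_j)·B_j` as an identity of polynomials. -/
theorem birkhoff_case_a_expansion_exact
    (N : ℕ) (hN : 1 ≤ N) (τ : Fin (N + 1) → ℝ) (hτ : StrictMono τ)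
    (B : Fin (N + 1) → Polynomial ℝ)
    (hBdeg : ∀ j, (B j).natDegree ≤ N)
    (hB00 : (B 0).eval (τ 0) = 1)
    (hBj0 : ∀ j : Fin N, (B j.succ).eval (τ 0) = 0)
    (hB0' : ∀ i : Fin N, (derivative (B 0)).eval (τ i.succ) = 0)
    (hBj' : ∀ i j : Fin N,
      (derivative (B j.succ)).eval (τ i.succ) = if i = j then 1 else 0) :
    ∀ p : Polynomial ℝ, p.natDegree ≤ N →
      p = p.eval (τ 0) • B 0 +
        ∑ j : Fin N, ((derivative p).eval (τ j.succ)) • B j.succ := by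
  intro p hp
  set q : Polynomial ℝ := p.eval (τ 0) • B 0 +
      ∑ j : Fin N, ((derivative p).eval (τ j.succ)) • B j.succ with hq
  set r : Polynomial ℝ := p - q with hr
  have hqdeg : q.natDegree ≤ N := by
    apply le_trans (natDegree_add_le _ _)
    refine max_le (le_trans (natDegree_smul_le _ _) (hBdeg 0)) ?_
    refine le_trans (natDegree_sum_le _ _) ?_
    simp only [Finset.fold_max_le]
    exact ⟨Nat.zero_le N, fun j _ =>
      le_trans (natDegree_smul_le _ _) (hBdeg j.succ)⟩
  have hrdeg : r.natDegree ≤ N := le_trans (natDegree_sub_le _ _) (max_le hp hqdeg)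
  -- derivative r vanishes at the N points τ i.succ
  have hdr : derivative r = 0 := by
    apply eq_zero_of_natDegree_lt_card_of_eval_eq_zero (derivative r)
      (f := fun i : Fin N => τ i.succ)
      (fun i j hij => Fin.succ_injective N (hτ.injective hij))
    · intro i
      simp only [hr, hq, derivative_sub, derivative_add, derivative_smul,
        derivative_sum, eval_sub, eval_add, eval_smul, eval_finset_sum,
        smul_eq_mul]
      rw [hB0' i]
      have key : ∀ j : Fin N,
          (derivative p).eval (τ j.succ) *
            (derivative (B j.succ)).eval (τ i.succ) =
          if i = j then (derivative p).eval (τ i.succ) else 0 := by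
        intro j
        rw [hBj' i j]
        split <;> simp_all
      rw [Finset.sum_congr rfl (fun j _ => key j)]
      simp
    · have h1 : (derivative r).natDegree ≤ r.natDegree - 1 := natDegree_derivative_le r
      have h2 : (derivative r).natDegree < N := by omega
      simpa using h2
  have hrC : r = C (r.eval (τ 0)) := by
    rw [eq_C_of_derivative_eq_zero hdr, eval_C]
  have hr0 : r.eval (τ 0) = 0 := by
    simp only [hr, hq, eval_sub, eval_add, eval_smul, eval_finset_sum, smul_eq_mul, hB00]
    rw [Finset.sum_congr rfl (fun j _ => by rw [hBj0 j, mul_zero])]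
    simp
  have : r = 0 := by rw [hrC, hr0, map_zero]
  linear_combination (norm := (rw [hr]; ring_nf)) this
end

section
/- Let N ≥ 1, let τ_0 < τ_1 < ... < τ_N be real numbers, and let B_0,...,B_N be a Case-(b) Birkhoff basis for these nodes. Then for every real polynomial p of degree ≤ N one has the identity of polynomials p = Σ_{j=0}^{N−1} p'(τ_j)·B_j + p(τ_N)·B_N. -/
open Polynomial

/-- Case (b): the Birkhoff expansion reproduces every polynomial of degree ≤ N:
`p = Σ_{j=0}^{N−1} p'(τ_j)·B_j + p(τ_N)·B_N` as an identity of polynomials. -/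
theorem birkhoff_case_b_expansion_exact
    (N : ℕ) (hN : 1 ≤ N) (τ : Fin (N + 1) → ℝ) (hτ : StrictMono τ)
    (B : Fin (N + 1) → Polynomial ℝ)
    (hBdeg : ∀ j, (B j).natDegree ≤ N)
    (hBNN : (B (Fin.last N)).eval (τ (Fin.last N)) = 1)
    (hBjN : ∀ j : Fin N, (B j.castSucc).eval (τ (Fin.last N)) = 0)
    (hBN' : ∀ i : Fin N, (derivative (B (Fin.last N))).eval (τ i.castSucc) = 0)
    (hBj' : ∀ i j : Fin N,
      (derivative (B j.castSucc)).eval (τ i.castSucc) = if i = j then 1 else 0) :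
    ∀ p : Polynomial ℝ, p.natDegree ≤ N →
      p = (∑ j : Fin N, ((derivative p).eval (τ j.castSucc)) • B j.castSucc) +
        p.eval (τ (Fin.last N)) • B (Fin.last N) := by
  intro p hp
  set R : Polynomial ℝ :=
    (∑ j : Fin N, ((derivative p).eval (τ j.castSucc)) • B j.castSucc) +
      p.eval (τ (Fin.last N)) • B (Fin.last N) with hRdef
  set q : Polynomial ℝ := p - R with hqdef
  have hRdeg : R.natDegree ≤ N := by
    refine le_trans (natDegree_add_le _ _) (max_le ?_ ?_)
    · exact natDegree_sum_le_of_forall_le _ _ fun j _ =>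
        le_trans (natDegree_smul_le _ _) (hBdeg _)
    · exact le_trans (natDegree_smul_le _ _) (hBdeg _)
  have hqdeg : q.natDegree ≤ N := le_trans (natDegree_sub_le _ _) (max_le hp hRdeg)
  -- derivative of q vanishes at the N points τ i.castSucc
  have hderiv : ∀ i : Fin N, (derivative q).eval (τ i.castSucc) = 0 := by
    intro i
    have : (derivative R).eval (τ i.castSucc) = (derivative p).eval (τ i.castSucc) := by
      rw [hRdef, derivative_add, derivative_sum, eval_add, derivative_smul, eval_smul,
        hBN' i, smul_zero, add_zero]
      have : ∀ j : Fin N,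
          (derivative (((derivative p).eval (τ j.castSucc)) • B j.castSucc)).eval
            (τ i.castSucc)
          = if i = j then (derivative p).eval (τ i.castSucc) else 0 := by
        intro j
        rw [derivative_smul, eval_smul, hBj' i j]
        by_cases h : i = j <;> simp [h]
      rw [eval_finset_sum]
      simp only [this]
      simp
    rw [hqdef, derivative_sub, eval_sub, this, sub_self]
  have hinj : Function.Injective (fun i : Fin N => τ i.castSucc) :=
    fun a b hab => by
      have := hτ.injective hab
      exact Fin.castSucc_injective N this
  have hdq : derivative q = 0 := by
    by_contra h
    have hlt : (derivative q).natDegree < N :=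
      lt_of_le_of_lt (natDegree_derivative_le q)
        (lt_of_le_of_lt (Nat.sub_le_sub_right hqdeg 1) (Nat.sub_lt hN one_pos))
    exact h (Polynomial.eq_zero_of_natDegree_lt_card_of_eval_eq_zero' (derivative q)
      (Finset.univ.image fun i : Fin N => τ i.castSucc)
      (by
        intro x hx
        rcases Finset.mem_image.1 hx with ⟨i, _, rfl⟩
        exact hderiv i)
      (by
        rwa [Finset.card_image_of_injective _ hinj, Finset.card_univ, Fintype.card_fin]))
  have hq0 : q.natDegree = 0 := natDegree_eq_zero_of_derivative_eq_zero hdq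
  have hqC' : q = C (q.coeff 0) := Polynomial.eq_C_of_natDegree_eq_zero hq0
  have hqeval : q.eval (τ (Fin.last N)) = 0 := by
    have hR : R.eval (τ (Fin.last N)) = p.eval (τ (Fin.last N)) := by
      rw [hRdef, eval_add, eval_finset_sum]
      simp only [eval_smul, hBjN, smul_zero, Finset.sum_const_zero, hBNN, smul_eq_mul,
        mul_one, zero_add, mul_zero]
    rw [hqdef, eval_sub, hR, sub_self]
  have : q = 0 := by
    rw [hqC'] at hqeval ⊢
    simp only [eval_C] at hqeval
    rw [hqeval, map_zero]
  exact (sub_eq_zero.1 (hqdef ▸ this))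
end
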